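/- Let (G, L) be a rational structure and H ≤ G a subgroup. Then H is L-quasi-convex if and only if the language L ∩ μ⁻¹(H) = { w ∈ L : μ(w) ∈ H } is regular (i.e. H is L-rational). -/

import Mathlib

open List

/-- A word over the alphabet Ã = A ∪ A⁻¹ is a `List (A × Bool)`: the letter `(a, true)`
stands for `a` and `(a, false)` for the formal inverse `a⁻¹`. A word is *reduced* if it
has no factor `a·a⁻¹` or `a⁻¹·a`. -/
def Reduced {A : Type*} (w : List (A × Bool)) : Prop :=
  w.Chain' fun p q => ¬(p.1 = q.1 ∧ q.2 = !p.2)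

variable {A : Type*} [Fintype A] {G : Type*} [Group G]

/-- Evaluation in `G` of a word over Ã, determined by the images `f a` of the letters.
This is the (inverse-respecting) monoid homomorphism μ : Ã* → G. -/
def eval (f : A → G) (w : List (A × Bool)) : G :=
  (w.map fun p => if p.2 then f p.1 else (f p.1)⁻¹).prod

/-- Word length of `g ∈ G` with respect to the generators `A`:
the least length of a word over Ã mapping onto `g`. -/
noncomputable def wlen (f : A → G) (g : G) : ℕ :=
  sInf {n | ∃ w : List (A × Bool), eval f w = g ∧ w.length = n}

/-- A rational structure: `L` is a regular language of reduced words with μ(L) = G. -/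
def RationalStructure (f : A → G) (L : Set (List (A × Bool))) : Prop :=
  Language.IsRegular (L : Language (A × Bool)) ∧ (∀ w ∈ L, Reduced w) ∧
    ∀ g : G, ∃ w ∈ L, eval f w = g

/-- `H` is L-quasi-convex with constant `k`: for every `w ∈ L` with `μ(w) ∈ H` and
every prefix `u` of `w`, there is `h ∈ H` with `|h⁻¹ μ(u)| ≤ k`. -/
def QCW (f : A → G) (L : Set (List (A × Bool))) (H : Subgroup G) (k : ℕ) : Prop :=
  ∀ w ∈ L, eval f w ∈ H → ∀ u, u <+: w → ∃ h ∈ H, wlen f (h⁻¹ * eval f u) ≤ k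

/-- The set of right cosets `H·μ(u)` where `u` ranges over prefixes of words
`w ∈ L` with `μ(w) ∈ H` (the vertex set of the Stallings graph Γ_L(H)). -/
def VL (f : A → G) (L : Set (List (A × Bool))) (H : Subgroup G) : Set (Set G) :=
  {S | ∃ w ∈ L, eval f w ∈ H ∧ ∃ u, u <+: w ∧ S = {x | ∃ h ∈ H, x = h * eval f u}}

/-! ### Auxiliary lemmas -/

theorem eval_nil' (f : A → G) : eval f [] = 1 := rfl

theorem eval_append' (f : A → G) (u v : List (A × Bool)) :
    eval f (u ++ v) = eval f u * eval f v := by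
  simp [eval]

/-- The value of a single letter. -/
def lett (f : A → G) (p : A × Bool) : G := if p.2 then f p.1 else (f p.1)⁻¹

theorem eval_append_singleton' (f : A → G) (w : List (A × Bool)) (p : A × Bool) :
    eval f (w ++ [p]) = eval f w * lett f p := by
  simp [eval, lett]

/-- The formal inverse of a word. -/
def winv (w : List (A × Bool)) : List (A × Bool) :=
  (w.map fun p => (p.1, !p.2)).reverse

theorem eval_winv (f : A → G) (w : List (A × Bool)) :
    eval f (winv w) = (eval f w)⁻¹ := by
  induction w with
  | nil => simp [winv, eval]
  | cons p w ih =>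
    have h1 : (p :: w) = [p] ++ w := rfl
    rw [h1, eval_append']
    have hw : winv ([p] ++ w) = winv w ++ winv [p] := by simp [winv]
    rw [hw, eval_append', ih, mul_inv_rev]
    congr 1
    cases hb : p.2 <;> simp [winv, eval, hb]

theorem wlen_le' (f : A → G) (w : List (A × Bool)) : wlen f (eval f w) ≤ w.length :=
  Nat.sInf_le ⟨w, rfl, rfl⟩

theorem wlen_witness (f : A → G) (g : G) (hne : ∃ w : List (A × Bool), eval f w = g) :
    ∃ w : List (A × Bool), eval f w = g ∧ w.length = wlen f g := by
  obtain ⟨w, hw⟩ := hne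
  exact Nat.sInf_mem (⟨w.length, w, hw, rfl⟩ :
    Set.Nonempty {n | ∃ w : List (A × Bool), eval f w = g ∧ w.length = n})

/-- From any state that can reach an accept state, some word of length at most the number of
states is accepted. -/
theorem DFA.exists_short {α : Type*} {σ : Type*} [Fintype σ] (M : DFA α σ) (s : σ)
    (h : ∃ x, M.evalFrom s x ∈ M.accept) :
    ∃ y, M.evalFrom s y ∈ M.accept ∧ y.length ≤ Fintype.card σ := by
  classical
  obtain ⟨x, hx⟩ := h
  set T : Set ℕ := {n | ∃ y : List α, M.evalFrom s y ∈ M.accept ∧ y.length = n} with hT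
  have hTne : T.Nonempty := ⟨x.length, x, hx, rfl⟩
  obtain ⟨y, hy, hylen⟩ := Nat.sInf_mem hTne
  refine ⟨y, hy, ?_⟩
  by_contra hlen
  push_neg at hlen
  obtain ⟨q, a, b, c, hsplit, -, hbne, h3, h4, h5⟩ :=
    M.evalFrom_split (x := y) (s := s) (t := M.evalFrom s y) hlen.le rfl
  have hac : M.evalFrom s (a ++ c) = M.evalFrom s y := by
    rw [M.evalFrom_of_append, h3, h5]
  have hmem : (a ++ c).length ∈ T := ⟨a ++ c, by rw [hac]; exact hy, rfl⟩
  have hle : sInf T ≤ (a ++ c).length := Nat.sInf_le hmem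
  have hlt : (a ++ c).length < y.length := by
    subst hsplit
    simp only [List.length_append]
    have : 0 < b.length := List.length_pos_iff.mpr hbne
    omega
  omega

/-- Product DFA recognizing the intersection. -/
def DFA.inter' {α : Type*} {σ1 σ2 : Type*} (M1 : DFA α σ1) (M2 : DFA α σ2) :
    DFA α (σ1 × σ2) where
  step s p := (M1.step s.1 p, M2.step s.2 p)
  start := (M1.start, M2.start)
  accept := {s | s.1 ∈ M1.accept ∧ s.2 ∈ M2.accept}

theorem DFA.inter_evalFrom {α : Type*} {σ1 σ2 : Type*} (M1 : DFA α σ1) (M2 : DFA α σ2)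
    (s : σ1) (t : σ2) (w : List α) :
    (M1.inter' M2).evalFrom (s, t) w = (M1.evalFrom s w, M2.evalFrom t w) := by
  induction w generalizing s t with
  | nil => rfl
  | cons p w ih => exact ih _ _

theorem DFA.mem_inter_accepts {α : Type*} {σ1 σ2 : Type*} (M1 : DFA α σ1) (M2 : DFA α σ2)
    (w : List α) : w ∈ (M1.inter' M2).accepts ↔ w ∈ M1.accepts ∧ w ∈ M2.accepts := by
  simp only [DFA.mem_accepts, DFA.eval]
  rw [show (M1.inter' M2).start = (M1.start, M2.start) from rfl,
    DFA.inter_evalFrom]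
  rfl

/-- Any DFA with finitely many states (in any universe) recognizes a regular language. -/
theorem DFA.accepts_isRegular {α : Type*} {σ : Type*} [Fintype σ] (M : DFA α σ) :
    M.accepts.IsRegular :=
  ⟨Fin (Fintype.card σ), inferInstance, DFA.reindex (Fintype.equivFin σ) M,
    M.accepts_reindex _⟩

/-- The right coset `H g` as a subset of `G`. -/
def cosetR (H : Subgroup G) (g : G) : Set G := {x | x * g⁻¹ ∈ H}

theorem mem_cosetR_self (H : Subgroup G) (g : G) : g ∈ cosetR H g := by
  simp only [cosetR, Set.mem_setOf_eq, mul_inv_cancel]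
  exact H.one_mem

theorem cosetR_eq_iff (H : Subgroup G) (g g' : G) :
    cosetR H g = cosetR H g' ↔ g' * g⁻¹ ∈ H := by
  constructor
  · intro h
    have := mem_cosetR_self H g'
    rw [← h] at this
    exact this
  · intro h
    ext x
    simp only [cosetR, Set.mem_setOf_eq]
    constructor
    · intro hx
      have hh : x * g'⁻¹ = (x * g⁻¹) * (g' * g⁻¹)⁻¹ := by group
      rw [hh]
      exact H.mul_mem hx (H.inv_mem h)
    · intro hx
      have hh : x * g⁻¹ = (x * g'⁻¹) * (g' * g⁻¹) := by group
      rw [hh]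
      exact H.mul_mem hx h

theorem cosetR_mul_congr {H : Subgroup G} {g g' : G}
    (h : cosetR H g = cosetR H g') (x : G) : cosetR H (g * x) = cosetR H (g' * x) := by
  rw [cosetR_eq_iff] at h ⊢
  have hh : g' * x * (g * x)⁻¹ = g' * g⁻¹ := by group
  rw [hh]
  exact h

-- A choice of representative of a right coset.
open Classical in
noncomputable def repc (H : Subgroup G) (q : Set G) : G :=
  if h : ∃ g, cosetR H g = q then h.choose else 1

open Classical in
theorem cosetR_repc {H : Subgroup G} {q : Set G} (h : ∃ g, cosetR H g = q) :
    cosetR H (repc H q) = q := by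
  rw [repc, dif_pos h]
  exact h.choose_spec

-- The coset automaton used in the quasi-convex ⟹ regular direction.
open Classical in
noncomputable def qcDFA (f : A → G) (H : Subgroup G) (S : Set (Set G))
    (h1 : cosetR H 1 ∈ S) : DFA (A × Bool) (Option ↥S) where
  step s p := s.bind fun q =>
    if h : cosetR H (repc H q.1 * lett f p) ∈ S then some ⟨_, h⟩ else none
  start := some ⟨cosetR H 1, h1⟩
  accept := {s | Option.map Subtype.val s = some (cosetR H 1)}

theorem qcDFA_eval_some (f : A → G) (H : Subgroup G) (S : Set (Set G))
    (h1 : cosetR H 1 ∈ S) (hS : ∀ q ∈ S, ∃ g, cosetR H g = q) :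
    ∀ w : List (A × Bool), ∀ q : ↥S,
      (qcDFA f H S h1).evalFrom (qcDFA f H S h1).start w = some q →
        (q : Set G) = cosetR H (eval f w) := by
  classical
  intro w
  induction w using List.reverseRec with
  | nil =>
    intro q hq
    have : (some ⟨cosetR H 1, h1⟩ : Option ↥S) = some q := hq
    rw [eval_nil']
    rw [Option.some.injEq] at this
    rw [← this]
  | append_singleton w p ih =>
    intro q hq
    rw [DFA.evalFrom_append_singleton] at hq
    cases hev : (qcDFA f H S h1).evalFrom (qcDFA f H S h1).start w with
    | none => rw [hev] at hq; exact absurd hq (by simp [qcDFA])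
    | some q' =>
      rw [hev] at hq
      have hq' : (q' : Set G) = cosetR H (eval f w) := ih q' hev
      have hstep : (qcDFA f H S h1).step (some q') p =
          if h : cosetR H (repc H (q' : Set G) * lett f p) ∈ S
            then some ⟨_, h⟩ else none := rfl
      rw [hstep] at hq
      split at hq
      · rw [Option.some.injEq] at hq
        rw [← hq]
        have hrep : cosetR H (repc H (q' : Set G)) = (q' : Set G) :=
          cosetR_repc (hS _ q'.2)
        have : cosetR H (repc H (q' : Set G) * lett f p)
            = cosetR H (eval f w * lett f p) :=
          cosetR_mul_congr (by rw [hrep, hq']) _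
        rw [show ((⟨cosetR H (repc H (q' : Set G) * lett f p), _⟩ : ↥S) : Set G)
          = cosetR H (repc H (q' : Set G) * lett f p) from rfl, this,
          eval_append_singleton']
      · exact absurd hq (by simp)

theorem qcDFA_eval_isSome (f : A → G) (H : Subgroup G) (S : Set (Set G))
    (h1 : cosetR H 1 ∈ S) (hS : ∀ q ∈ S, ∃ g, cosetR H g = q) :
    ∀ w : List (A × Bool), (∀ u, u <+: w → cosetR H (eval f u) ∈ S) →
      ∃ q : ↥S, (qcDFA f H S h1).evalFrom (qcDFA f H S h1).start w = some q := by
  classical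
  intro w
  induction w using List.reverseRec with
  | nil => exact fun _ => ⟨⟨cosetR H 1, h1⟩, rfl⟩
  | append_singleton w p ih =>
    intro hpre
    obtain ⟨q', hq'⟩ := ih (fun u hu => hpre u (hu.trans (List.prefix_append _ _)))
    have hq'v : (q' : Set G) = cosetR H (eval f w) :=
      qcDFA_eval_some f H S h1 hS w q' hq'
    rw [DFA.evalFrom_append_singleton, hq']
    have hrep : cosetR H (repc H (q' : Set G)) = (q' : Set G) :=
      cosetR_repc (hS _ q'.2)
    have hco : cosetR H (repc H (q' : Set G) * lett f p)
        = cosetR H (eval f (w ++ [p])) := by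
      rw [eval_append_singleton']
      exact cosetR_mul_congr (by rw [hrep, hq'v]) _
    have hmem : cosetR H (repc H (q' : Set G) * lett f p) ∈ S := by
      rw [hco]
      exact hpre _ (List.prefix_refl _)
    have hstep : (qcDFA f H S h1).step (some q') p
        = some (⟨_, hmem⟩ : ↥S) := by
      show (if h : cosetR H (repc H (q' : Set G) * lett f p) ∈ S
        then some (⟨_, h⟩ : ↥S) else none) = _
      rw [dif_pos hmem]
    exact ⟨_, hstep⟩

/-- H is L-quasi-convex iff L ∩ μ⁻¹(H) is a regular language
(i.e. H is L-rational). -/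
theorem stmt3 (f : A → G) (L : Set (List (A × Bool))) (H : Subgroup G)
    (hL : RationalStructure f L) :
    (∃ k, QCW f L H k) ↔
      Language.IsRegular ({w | w ∈ L ∧ eval f w ∈ H} : Language (A × Bool)) := by
  classical
  constructor
  · rintro ⟨k, hq⟩
    -- the ball of radius k and the finite set of cosets met by short representatives
    set ball : Set G := {g | ∃ w : List (A × Bool), eval f w = g ∧ w.length ≤ k}
      with hball
    have hballfin : ball.Finite := by
      apply ((List.finite_length_le (A × Bool) k).image (eval f)).subset
      rintro g ⟨w, rfl, hw⟩
      exact ⟨w, hw, rfl⟩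
    set S : Set (Set G) := cosetR H '' ball with hSdef
    have hSfin : S.Finite := hballfin.image _
    haveI : Fintype ↥S := hSfin.fintype
    have h1 : cosetR H 1 ∈ S := ⟨1, ⟨[], rfl, Nat.zero_le k⟩, rfl⟩
    have hS : ∀ q ∈ S, ∃ g, cosetR H g = q := by
      rintro q ⟨g, -, rfl⟩
      exact ⟨g, rfl⟩
    set M := qcDFA f H S h1 with hM
    obtain ⟨σ1, i1, M1, hM1⟩ := hL.1
    -- the target language equals M1.accepts ∩ M.accepts
    have key : ({w | w ∈ L ∧ eval f w ∈ H} : Language (A × Bool))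
        = (M1.inter' M).accepts := by
      ext w
      refine Iff.trans ?_ (DFA.mem_inter_accepts M1 M w).symm
      constructor
      · rintro ⟨hwL, hwH⟩
        constructor
        · rw [hM1]; exact hwL
        · -- all coset states of prefixes are in S
          have hpre : ∀ u, u <+: w → cosetR H (eval f u) ∈ S := by
            intro u hu
            obtain ⟨h, hh, hwl⟩ := hq w hwL hwH u hu
            set g := h⁻¹ * eval f u with hg
            obtain ⟨w0, hw0, hw0len⟩ := wlen_witness f g (by
              obtain ⟨w', -, hw'⟩ := hL.2.2 g
              exact ⟨w', hw'⟩)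
            have hgball : g ∈ ball := ⟨w0, hw0, by rw [hw0len]; exact hwl⟩
            have : cosetR H g = cosetR H (eval f u) := by
              rw [cosetR_eq_iff]
              have : eval f u * g⁻¹ = h := by rw [hg]; group
              rw [this]
              exact hh
            rw [← this]
            exact ⟨g, hgball, rfl⟩
          obtain ⟨q, hqeq⟩ := qcDFA_eval_isSome f H S h1 hS w hpre
          have hqv : (q : Set G) = cosetR H (eval f w) :=
            qcDFA_eval_some f H S h1 hS w q hqeq
          rw [DFA.mem_accepts]
          show Option.map Subtype.val (M.eval w) = some (cosetR H 1)
          rw [show M.eval w = M.evalFrom M.start w from rfl, hqeq]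
          simp only [Option.map_some, Option.some.injEq]
          rw [hqv, cosetR_eq_iff]
          simpa using H.inv_mem hwH
      · rintro ⟨hw1, hw2⟩
        have hwL : w ∈ L := by rw [hM1] at hw1; exact hw1
        refine ⟨hwL, ?_⟩
        rw [DFA.mem_accepts] at hw2
        have hw2' : Option.map Subtype.val (M.evalFrom M.start w)
            = some (cosetR H 1) := hw2
        obtain ⟨q, hqeq, hqv⟩ := Option.map_eq_some_iff.mp hw2'
        have : (q : Set G) = cosetR H (eval f w) :=
          qcDFA_eval_some f H S h1 hS w q hqeq
        rw [this] at hqv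
        rw [cosetR_eq_iff] at hqv
        simpa using H.inv_mem hqv
    rw [key]
    haveI : Fintype (σ1 × Option ↥S) := inferInstance
    exact DFA.accepts_isRegular _
  · rintro ⟨σ, i, N, hN⟩
    refine ⟨Fintype.card σ, ?_⟩
    intro w hwL hwH u hu
    obtain ⟨v, rfl⟩ := hu
    have hwacc : (u ++ v) ∈ N.accepts := by
      rw [hN]
      exact ⟨hwL, hwH⟩
    rw [DFA.mem_accepts] at hwacc
    have heval : N.eval (u ++ v) = N.evalFrom (N.eval u) v :=
      N.evalFrom_of_append _ _ _
    obtain ⟨y, hy, hylen⟩ := N.exists_short (N.eval u) ⟨v, by rw [← heval]; exact hwacc⟩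
    have huy : (u ++ y) ∈ N.accepts := by
      rw [DFA.mem_accepts]
      have : N.eval (u ++ y) = N.evalFrom (N.eval u) y := N.evalFrom_of_append _ _ _
      rw [this]
      exact hy
    rw [hN] at huy
    obtain ⟨-, hH⟩ := huy
    refine ⟨eval f (u ++ y), hH, ?_⟩
    have hcalc : (eval f (u ++ y))⁻¹ * eval f u = eval f (winv y) := by
      rw [eval_winv, eval_append']
      group
    rw [hcalc]
    refine (wlen_le' f (winv y)).trans ?_
    have : (winv y).length = y.length := by simp [winv]
    rw [this]
    exact hylen
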